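/- Along any solution of the quantized Hazeltine system Ẇ = [W,M₁]+[Θ,M₂], Θ̇ = [Θ,M₁] − α[Θ,χ], χ̇ = [χ,M₁]+[Θ,M₂], the quantity tr((W − χ)ᵏ) is constant in time for every natural number k. -/

import Mathlib

open Matrix

/-- along any solution of the quantized Hazeltine system
`Ẇ = [W,M₁]+[Θ,M₂]`, `Θ̇ = [Θ,M₁] − α[Θ,χ]`, `χ̇ = [χ,M₁]+[Θ,M₂]`, the quantity
`tr((W − χ)ᵏ)` is constant in time for every natural number `k`. -/
theorem stmt17 (N : ℕ) (W Θ χ M₁ M₂ : ℝ → Matrix (Fin N) (Fin N) ℂ) (α : ℝ)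
    (hW : ∀ t i j, HasDerivAt (fun s => W s i j)
      (((W t * M₁ t - M₁ t * W t) + (Θ t * M₂ t - M₂ t * Θ t)) i j) t)
    (hΘ : ∀ t i j, HasDerivAt (fun s => Θ s i j)
      (((Θ t * M₁ t - M₁ t * Θ t) - α • (Θ t * χ t - χ t * Θ t)) i j) t)
    (hχ : ∀ t i j, HasDerivAt (fun s => χ s i j)
      (((χ t * M₁ t - M₁ t * χ t) + (Θ t * M₂ t - M₂ t * Θ t)) i j) t) :
    ∀ (k : ℕ) (s t : ℝ), ((W s - χ s) ^ k).trace = ((W t - χ t) ^ k).trace := by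
  set D : ℝ → Matrix (Fin N) (Fin N) ℂ := fun s => W s - χ s with hDdef
  have hD : ∀ t i j, HasDerivAt (fun s => D s i j)
      ((D t * M₁ t - M₁ t * D t) i j) t := by
    intro t i j
    have h := (hW t i j).sub (hχ t i j)
    have hfun : (fun s => D s i j) = fun s => W s i j - χ s i j := by
      funext s; simp [hDdef, Matrix.sub_apply]
    have hval : D t * M₁ t - M₁ t * D t
        = ((W t * M₁ t - M₁ t * W t) + (Θ t * M₂ t - M₂ t * Θ t))
          - ((χ t * M₁ t - M₁ t * χ t) + (Θ t * M₂ t - M₂ t * Θ t)) := by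
      simp only [hDdef]; noncomm_ring
    rw [hfun, hval, Matrix.sub_apply]
    exact h
  have hpow : ∀ (k : ℕ) (t : ℝ) (i j : Fin N),
      HasDerivAt (fun s => (D s ^ k) i j)
        ((D t ^ k * M₁ t - M₁ t * D t ^ k) i j) t := by
    intro k
    induction k with
    | zero =>
      intro t i j
      have : (fun s => (D s ^ 0) i j) = fun _ => (1 : Matrix (Fin N) (Fin N) ℂ) i j := by
        funext s; simp
      rw [this]
      simpa using hasDerivAt_const t ((1 : Matrix (Fin N) (Fin N) ℂ) i j)
    | succ k ih =>
      intro t i j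
      have h : HasDerivAt (fun s => ∑ l, (D s ^ k) i l * D s l j)
          (∑ l, ((D t ^ k * M₁ t - M₁ t * D t ^ k) i l * D t l j
            + (D t ^ k) i l * (D t * M₁ t - M₁ t * D t) l j)) t :=
        HasDerivAt.fun_sum (fun l _ => (ih t i l).mul (hD t l j))
      have hfun : (fun s => (D s ^ (k + 1)) i j)
          = fun s => ∑ l, (D s ^ k) i l * D s l j := by
        funext s; rw [pow_succ, Matrix.mul_apply]
      have key : D t ^ (k + 1) * M₁ t - M₁ t * D t ^ (k + 1)
          = (D t ^ k * M₁ t - M₁ t * D t ^ k) * D t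
            + D t ^ k * (D t * M₁ t - M₁ t * D t) := by
        rw [pow_succ]; noncomm_ring
      rw [hfun, key, Matrix.add_apply, Matrix.mul_apply, Matrix.mul_apply,
        ← Finset.sum_add_distrib]
      exact h
  intro k s t
  have htr : ∀ t : ℝ, HasDerivAt (fun s => ((D s) ^ k).trace) 0 t := by
    intro t
    have h : HasDerivAt (fun s => ∑ i, ((D s) ^ k) i i)
        (∑ i, (D t ^ k * M₁ t - M₁ t * D t ^ k) i i) t :=
      HasDerivAt.fun_sum (fun i _ => hpow k t i i)
    have hfun : (fun s => ((D s) ^ k).trace) = fun s => ∑ i, ((D s) ^ k) i i := by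
      funext s; rw [Matrix.trace]; rfl
    have hval : (∑ i, (D t ^ k * M₁ t - M₁ t * D t ^ k) i i) = 0 := by
      have : (D t ^ k * M₁ t - M₁ t * D t ^ k).trace = 0 := by
        rw [Matrix.trace_sub, Matrix.trace_mul_comm, sub_self]
      simpa [Matrix.trace, Matrix.diag] using this
    rw [hfun]
    rw [← hval]
    exact h
  have hconst := is_const_of_deriv_eq_zero
    (f := fun s => ((D s) ^ k).trace)
    (fun x => (htr x).differentiableAt)
    (fun x => (htr x).deriv)
  exact hconst s t
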